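/- Let G be a d-sphere with d >= 2, let e = (a,b) be an edge of G, and let H be obtained from G by an edge subdivision at e. Then for every complete subgraph x on d-1 vertices (a (d-2)-dimensional simplex) contained in the dual graph of e, the degree of x in H is one more than the degree of x in G. -/

import Mathlib

universe u

open SimpleGraph

/-- A graph is contractible if it is a one-point graph, or if it has a vertex `x`
such that both the unit sphere `S(x)` and the graph with `x` deleted are contractible. -/
inductive GraphContractible : ∀ {V : Type u}, SimpleGraph V → Prop
  | point {V : Type u} (G : SimpleGraph V) (h1 : Nonempty V) (h2 : Subsingleton V) :
      GraphContractible G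
  | step {V : Type u} (G : SimpleGraph V) (x : V)
      (hS : GraphContractible (G.induce (G.neighborSet x)))
      (hD : GraphContractible (G.induce {y : V | y ≠ x})) :
      GraphContractible G

/-- `IsSphere d G` : `G` is a `d`-sphere.  The empty graph is the `(-1)`-sphere;
for `d ≥ 0`, a `d`-sphere is a nonempty graph all of whose unit spheres are
`(d-1)`-spheres and such that deleting some vertex leaves a contractible graph. -/
inductive IsSphere : ℤ → ∀ {V : Type u}, SimpleGraph V → Prop
  | empty {V : Type u} (G : SimpleGraph V) (h : IsEmpty V) : IsSphere (-1) G
  | step {d : ℤ} (hd : 0 ≤ d) {V : Type u} (G : SimpleGraph V) (hne : Nonempty V)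
      (hS : ∀ x : V, IsSphere (d - 1) (G.induce (G.neighborSet x)))
      (hx : ∃ x : V, GraphContractible (G.induce {y : V | y ≠ x})) :
      IsSphere d G

/-- The dual set of a set `A` of vertices in `G`: all vertices adjacent to every vertex
of `A` (the vertex set of the intersection of the unit spheres centered at points of `A`);
the dual of the empty set is everything. -/
def dualSet {V : Type u} (G : SimpleGraph V) (A : Set V) : Set V :=
  {z : V | ∀ y ∈ A, G.Adj y z}

/-- Edge subdivision at the edge `(a, b)`: delete the edge, add a new vertex (`none`)
joined to `a`, to `b`, and to every common neighbor of `a` and `b`. -/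
def edgeSubdivision {V : Type u} (G : SimpleGraph V) (a b : V) : SimpleGraph (Option V) where
  Adj u v :=
    match u, v with
    | some x, some y => G.Adj x y ∧ ¬((x = a ∧ y = b) ∨ (x = b ∧ y = a))
    | some x, none => x = a ∨ x = b ∨ (G.Adj a x ∧ G.Adj b x)
    | none, some y => y = a ∨ y = b ∨ (G.Adj a y ∧ G.Adj b y)
    | none, none => False
  symm := by
    constructor
    rintro (_ | x) (_ | y) h
    · exact h
    · exact h
    · exact h
    · exact ⟨h.1.symm, fun hc => h.2 (hc.elim (fun hh => Or.inr ⟨hh.2, hh.1⟩)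
        (fun hh => Or.inl ⟨hh.2, hh.1⟩))⟩
  loopless := by
    constructor
    rintro (_ | x) h
    · exact h
    · exact G.loopless.irrefl x h.1

/-- An edge subdivision at `e = (a,b)` increases by `1` the degree of every
`(d-2)`-dimensional simplex contained in the dual graph of `e` (i.e. every
`(d-1)`-vertex complete subgraph all of whose vertices are adjacent to `a` and `b`). -/
theorem edgeSubdivision_degree_succ {V : Type} [Fintype V]
    (d : ℕ) (hd : 2 ≤ d) (G : SimpleGraph V) (hG : IsSphere (d : ℤ) G)
    (a b : V) (hab : G.Adj a b)
    (K : Finset V) (hK : G.IsClique (K : Set V)) (hcard : K.card = d - 1)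
    (hKe : ∀ y ∈ K, G.Adj a y ∧ G.Adj b y) :
    (dualSet (edgeSubdivision G a b) (Option.some '' (K : Set V))).ncard =
      (dualSet G (K : Set V)).ncard + 1 := by
  have hA : a ∉ K := fun h => G.loopless.irrefl a (hKe a h).1
  have hB : b ∉ K := fun h => G.loopless.irrefl b (hKe b h).2
  have hset : dualSet (edgeSubdivision G a b) (Option.some '' (K : Set V))
      = insert none (Option.some '' dualSet G (K : Set V)) := by
    ext z
    cases z with
    | none =>
      simp only [dualSet, Set.mem_setOf_eq, Set.mem_insert_iff]
      constructor
      · intro _; exact Or.inl trivial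
      · rintro _ y ⟨w, hw, rfl⟩
        exact Or.inr (Or.inr ⟨(hKe w hw).1, (hKe w hw).2⟩)
    | some x =>
      simp only [dualSet, Set.mem_setOf_eq, Set.mem_insert_iff, Set.mem_image]
      constructor
      · intro h
        right
        exact ⟨x, fun y hy => (h (some y) ⟨y, hy, rfl⟩).1, rfl⟩
      · rintro (h | ⟨w, hw, hwx⟩)
        · exact absurd h (by simp)
        · cases hwx
          rintro y ⟨u, hu, rfl⟩
          refine ⟨hw u hu, ?_⟩
          rintro (⟨rfl, rfl⟩ | ⟨rfl, rfl⟩)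
          · exact hA hu
          · exact hB hu
  rw [hset, Set.ncard_insert_of_notMem (by simp),
    Set.ncard_image_of_injective _ (Option.some_injective V)]
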